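/- Let p be a general assignment mechanism and, for each z ∈ Z, let Ŷ(z) be a linear estimator of Ȳ(z) that is unbiased for every choice of potential outcomes. Let g₁, g₂ be contrast coefficient functions, with contrast estimators τ̂_l = Σ_z g_l(z)Ŷ(z) and population contrasts τ̄_l = Σ_z g_l(z)Ȳ(z), l = 1, 2. Then there exist real numbers R and R_i(z) (i = 1,…,N, z ∈ Z), depending only on p, the coefficients a, b, and g₁, g₂ (and not on the potential outcomes), such that, setting R_{ii}(z) = g₁(z) g₂(z) B_{ii}(z,z) and R_{ii*}(z,z*) = g₁(z) g₂(z*) B_{ii*}(z,z*) for i ≠ i*, for every choice of potential outcomes: Cov(τ̂_1, τ̂_2) = R + Σ_{z∈Z} Σ_{i=1}^N ( R_i(z) Y_i(z) + R_{ii}(z) Y_i(z)² ) + Σ_{z∈Z} Σ_{z*∈Z} Σ_{i=1}^N Σ_{i*≠i} R_{ii*}(z,z*) Y_i(z) Y_{i*}(z*) − τ̄_1 τ̄_2. -/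
import Mathlib


open Finset

/-- Expectation of a statistic `f` under a general assignment mechanism `p`. -/
def expect {N : ℕ} {Z : Type*} [Fintype Z] (p : (Fin N → Z) → ℝ)
    (f : (Fin N → Z) → ℝ) : ℝ :=
  ∑ w : Fin N → Z, p w * f w

/-- Covariance of two statistics `f₁, f₂` under a general assignment mechanism `p`. -/
def covar {N : ℕ} {Z : Type*} [Fintype Z] (p : (Fin N → Z) → ℝ)
    (f₁ f₂ : (Fin N → Z) → ℝ) : ℝ :=
  expect p (fun w => (f₁ w - expect p f₁) * (f₂ w - expect p f₂))

/-- A linear estimator of the treatment mean `Ȳ(z)`. -/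
def linEst {N : ℕ} {Z : Type*} [Fintype Z] [DecidableEq Z]
    (a : (Fin N → Z) → Z → ℝ) (b : (Fin N → Z) → Z → Fin N → ℝ)
    (Y : Fin N → Z → ℝ) (z : Z) (w : Fin N → Z) : ℝ :=
  a w z + ∑ i ∈ univ.filter (fun i => w i = z), b w z i * Y i z

/-- `B_{ii*}(z,z*) = ∑_{w : w(i)=z, w(i*)=z*} p(w) b_i(w,z) b_{i*}(w,z*)`. -/
def Bcoef {N : ℕ} {Z : Type*} [Fintype Z] [DecidableEq Z]
    (p : (Fin N → Z) → ℝ) (b : (Fin N → Z) → Z → Fin N → ℝ)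
    (i iStar : Fin N) (z zStar : Z) : ℝ :=
  ∑ w ∈ univ.filter (fun w : Fin N → Z => w i = z ∧ w iStar = zStar),
    p w * (b w z i * b w zStar iStar)

lemma covar_eq {N : ℕ} {Z : Type*} [Fintype Z] (p : (Fin N → Z) → ℝ)
    (hp1 : ∑ w : Fin N → Z, p w = 1) (f₁ f₂ : (Fin N → Z) → ℝ) :
    covar p f₁ f₂ = expect p (fun w => f₁ w * f₂ w) - expect p f₁ * expect p f₂ := by
  have h : ∀ w : Fin N → Z, p w * ((f₁ w - expect p f₁) * (f₂ w - expect p f₂))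
      = p w * (f₁ w * f₂ w) - expect p f₂ * (p w * f₁ w) - expect p f₁ * (p w * f₂ w)
        + expect p f₁ * expect p f₂ * p w := fun w => by ring
  calc covar p f₁ f₂ = ∑ w : Fin N → Z,
        (p w * (f₁ w * f₂ w) - expect p f₂ * (p w * f₁ w) - expect p f₁ * (p w * f₂ w)
          + expect p f₁ * expect p f₂ * p w) := Finset.sum_congr rfl fun w _ => h w
    _ = expect p (fun w => f₁ w * f₂ w) - expect p f₁ * expect p f₂ := by
        rw [Finset.sum_add_distrib, Finset.sum_sub_distrib, Finset.sum_sub_distrib,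
          ← Finset.mul_sum, ← Finset.mul_sum, ← Finset.mul_sum, hp1]
        simp only [_root_.expect]
        ring

lemma ite_zero_mul_ite_zero' {p q : Prop} [Decidable p] [Decidable q] (a b : ℝ) :
    (if p then a else 0) * (if q then b else 0) = if p ∧ q then a * b else 0 := by
  by_cases hp : p <;> by_cases hq : q <;> simp [hp, hq]

lemma pointwise {N : ℕ} {Z : Type*} [Fintype Z] [DecidableEq Z]
    (w : Fin N → Z) (g₁ g₂ : Z → ℝ) (A₁ A₂ q : ℝ) (bw : Z → Fin N → ℝ)
    (Y : Fin N → Z → ℝ) :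
    q * ((A₁ + ∑ z, g₁ z * ∑ i ∈ univ.filter (fun i => w i = z), bw z i * Y i z)
      * (A₂ + ∑ z, g₂ z * ∑ i ∈ univ.filter (fun i => w i = z), bw z i * Y i z))
    = q * (A₁ * A₂)
      + (∑ z, ∑ i, (q * (if w i = z then g₁ z * bw z i * A₂ + A₁ * (g₂ z * bw z i) else 0) * Y i z
          + g₁ z * g₂ z * (if w i = z ∧ w i = z then q * (bw z i * bw z i) else 0) * Y i z ^ 2))
      + ∑ z, ∑ zStar, ∑ i, ∑ iStar ∈ univ.erase i,
          g₁ z * g₂ zStar * (if w i = z ∧ w iStar = zStar then q * (bw z i * bw zStar iStar) else 0)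
            * (Y i z * Y iStar zStar) := by
  classical
  set S : Z → ℝ := fun z => ∑ i ∈ univ.filter (fun i => w i = z), bw z i * Y i z with hS
  have smulS : ∀ (c : ℝ) (z : Z), c * S z = ∑ i, if w i = z then c * (bw z i * Y i z) else 0 := by
    intro c z
    rw [hS, Finset.mul_sum, Finset.sum_filter]
  have hSif : ∀ z : Z, S z = ∑ i, if w i = z then bw z i * Y i z else 0 := by
    intro z
    have := smulS 1 z
    simpa using this
  set T₁ := ∑ z, g₁ z * S z with hT₁
  set T₂ := ∑ z, g₂ z * S z with hT₂
  have cross : (∑ z, ∑ i, q * (if w i = z then g₁ z * bw z i * A₂ + A₁ * (g₂ z * bw z i) else 0) * Y i z)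
      = q * (A₁ * T₂) + q * (T₁ * A₂) := by
    have h1 : ∀ z i, q * (if w i = z then g₁ z * bw z i * A₂ + A₁ * (g₂ z * bw z i) else 0) * Y i z
        = (if w i = z then (q * (A₁ * g₂ z)) * (bw z i * Y i z) else 0)
          + (if w i = z then (q * (g₁ z * A₂)) * (bw z i * Y i z) else 0) := by
      intro z i; split <;> ring
    have e1 : q * (A₁ * T₂) = ∑ z, (q * (A₁ * g₂ z)) * S z := by
      rw [hT₂, Finset.mul_sum, Finset.mul_sum]
      exact Finset.sum_congr rfl fun z _ => by ring
    have e2 : q * (T₁ * A₂) = ∑ z, (q * (g₁ z * A₂)) * S z := by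
      rw [hT₁, Finset.sum_mul, Finset.mul_sum]
      exact Finset.sum_congr rfl fun z _ => by ring
    rw [e1, e2, ← Finset.sum_add_distrib]
    refine Finset.sum_congr rfl fun z _ => ?_
    rw [Finset.sum_congr rfl fun i _ => h1 z i, Finset.sum_add_distrib,
      ← smulS (q * (A₁ * g₂ z)) z, ← smulS (q * (g₁ z * A₂)) z]
  have diag : ∀ z : Z, (∑ zStar, ∑ i : Fin N, g₁ z * g₂ zStar *
        (if w i = z ∧ w i = zStar then q * (bw z i * bw zStar i) else 0) * (Y i z * Y i zStar))
      = ∑ i, g₁ z * g₂ z * (if w i = z ∧ w i = z then q * (bw z i * bw z i) else 0) * Y i z ^ 2 := by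
    intro z
    rw [Finset.sum_comm]
    refine Finset.sum_congr rfl fun i _ => ?_
    by_cases h : w i = z
    · have h2 : ∀ zStar, g₁ z * g₂ zStar *
          (if w i = z ∧ w i = zStar then q * (bw z i * bw zStar i) else 0) * (Y i z * Y i zStar)
          = if w i = zStar then g₁ z * g₂ zStar * (q * (bw z i * bw zStar i)) * (Y i z * Y i zStar)
            else 0 := by
        intro zStar
        by_cases h3 : w i = zStar
        · rw [if_pos ⟨h, h3⟩, if_pos h3]
        · rw [if_neg (fun hc => h3 hc.2), if_neg h3]; ring
      rw [Finset.sum_congr rfl fun zS _ => h2 zS, Finset.sum_ite_eq univ (w i),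
        if_pos (Finset.mem_univ _), h, if_pos ⟨rfl, rfl⟩]
      ring
    · simp [h]
  have e : ∀ z zStar : Z, (q * (g₁ z * g₂ zStar)) * (S z * S zStar)
      = ∑ i, ∑ iStar : Fin N, g₁ z * g₂ zStar *
          (if w i = z ∧ w iStar = zStar then q * (bw z i * bw zStar iStar) else 0)
            * (Y i z * Y iStar zStar) := by
    intro z zStar
    rw [hSif z, hSif zStar, Finset.sum_mul_sum, Finset.mul_sum]
    refine Finset.sum_congr rfl fun i _ => ?_
    rw [Finset.mul_sum]
    refine Finset.sum_congr rfl fun iStar _ => ?_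
    rw [ite_zero_mul_ite_zero']
    by_cases hc : w i = z ∧ w iStar = zStar
    · rw [if_pos hc, if_pos hc]; ring
    · rw [if_neg hc, if_neg hc]; ring
  have hquad : q * (T₁ * T₂)
      = (∑ z, ∑ i, g₁ z * g₂ z * (if w i = z ∧ w i = z then q * (bw z i * bw z i) else 0) * Y i z ^ 2)
        + ∑ z, ∑ zStar, ∑ i, ∑ iStar ∈ univ.erase i,
            g₁ z * g₂ zStar * (if w i = z ∧ w iStar = zStar then q * (bw z i * bw zStar iStar) else 0)
              * (Y i z * Y iStar zStar) := by
    have step1 : q * (T₁ * T₂) = ∑ z, ∑ zStar, (q * (g₁ z * g₂ zStar)) * (S z * S zStar) := by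
      rw [hT₁, hT₂, Finset.sum_mul_sum, Finset.mul_sum]
      refine Finset.sum_congr rfl fun z _ => ?_
      rw [Finset.mul_sum]
      exact Finset.sum_congr rfl fun zS _ => by ring
    have split : ∀ z zStar (i : Fin N),
        (∑ iStar : Fin N, g₁ z * g₂ zStar *
          (if w i = z ∧ w iStar = zStar then q * (bw z i * bw zStar iStar) else 0)
            * (Y i z * Y iStar zStar))
        = g₁ z * g₂ zStar * (if w i = z ∧ w i = zStar then q * (bw z i * bw zStar i) else 0)
            * (Y i z * Y i zStar)
          + ∑ iStar ∈ univ.erase i, g₁ z * g₂ zStar *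
              (if w i = z ∧ w iStar = zStar then q * (bw z i * bw zStar iStar) else 0)
                * (Y i z * Y iStar zStar) :=
      fun z zStar i => (Finset.add_sum_erase univ _ (mem_univ i)).symm
    calc q * (T₁ * T₂) = ∑ z, ∑ zStar, (q * (g₁ z * g₂ zStar)) * (S z * S zStar) := step1
      _ = ∑ z, ∑ zStar, ∑ i, ∑ iStar : Fin N, g₁ z * g₂ zStar *
            (if w i = z ∧ w iStar = zStar then q * (bw z i * bw zStar iStar) else 0)
              * (Y i z * Y iStar zStar) :=
          Finset.sum_congr rfl fun z _ => Finset.sum_congr rfl fun zS _ => e z zS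
      _ = _ := by
          simp only [fun z zStar i => split z zStar i]
          rw [show (∑ z, ∑ zStar, ∑ i : Fin N,
            (g₁ z * g₂ zStar * (if w i = z ∧ w i = zStar then q * (bw z i * bw zStar i) else 0)
                * (Y i z * Y i zStar)
              + ∑ iStar ∈ univ.erase i, g₁ z * g₂ zStar *
                  (if w i = z ∧ w iStar = zStar then q * (bw z i * bw zStar iStar) else 0)
                    * (Y i z * Y iStar zStar)))
            = (∑ z, ∑ zStar, ∑ i : Fin N, g₁ z * g₂ zStar *
                (if w i = z ∧ w i = zStar then q * (bw z i * bw zStar i) else 0)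
                  * (Y i z * Y i zStar))
              + ∑ z, ∑ zStar, ∑ i : Fin N, ∑ iStar ∈ univ.erase i, g₁ z * g₂ zStar *
                  (if w i = z ∧ w iStar = zStar then q * (bw z i * bw zStar iStar) else 0)
                    * (Y i z * Y iStar zStar) from by
            simp only [Finset.sum_add_distrib]]
          congr 1
          exact Finset.sum_congr rfl fun z _ => diag z
  have expand : q * ((A₁ + T₁) * (A₂ + T₂))
      = q * (A₁ * A₂) + (q * (A₁ * T₂) + q * (T₁ * A₂)) + q * (T₁ * T₂) := by ring
  rw [expand, hquad, ← cross]
  simp only [Finset.sum_add_distrib]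
  ring

/-- Theorem 3: under a general assignment mechanism with unbiased linear
estimators `Ŷ(z)` and two contrast estimators `τ̂_l = ∑_z g_l(z) Ŷ(z)`, there
exist constants `R`, `R_i(z)` not depending on the potential outcomes such
that, with `R_{ii}(z) = g₁(z)g₂(z) B_{ii}(z,z)` and
`R_{ii*}(z,z*) = g₁(z)g₂(z*) B_{ii*}(z,z*)`,
`Cov(τ̂₁, τ̂₂) = R + ∑_z ∑_i (R_i(z) Y_i(z) + R_{ii}(z) Y_i(z)²)
 + ∑_z ∑_{z*} ∑_i ∑_{i*≠i} R_{ii*}(z,z*) Y_i(z) Y_{i*}(z*) − τ̄₁ τ̄₂`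
for every choice of potential outcomes. -/
theorem theorem3 {N : ℕ} {Z : Type*} [Fintype Z] [DecidableEq Z]
    (hN : 2 ≤ N) (hZ : 2 ≤ Fintype.card Z)
    (p : (Fin N → Z) → ℝ) (hp0 : ∀ w, 0 ≤ p w) (hp1 : ∑ w : Fin N → Z, p w = 1)
    (a : (Fin N → Z) → Z → ℝ) (b : (Fin N → Z) → Z → Fin N → ℝ)
    (hunb : ∀ (Y : Fin N → Z → ℝ) (z : Z),
      expect p (linEst a b Y z) = (∑ i, Y i z) / N)
    (g₁ g₂ : Z → ℝ) (hg₁ne : g₁ ≠ 0) (hg₂ne : g₂ ≠ 0)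
    (hg₁0 : ∑ z, g₁ z = 0) (hg₂0 : ∑ z, g₂ z = 0) :
    ∃ R : ℝ, ∃ Ri : Fin N → Z → ℝ,
      ∀ Y : Fin N → Z → ℝ,
        covar p (fun w => ∑ z, g₁ z * linEst a b Y z w)
            (fun w => ∑ z, g₂ z * linEst a b Y z w) =
          R + ∑ z, ∑ i, (Ri i z * Y i z + g₁ z * g₂ z * Bcoef p b i i z z * (Y i z) ^ 2)
            + ∑ z, ∑ zStar, ∑ i, ∑ iStar ∈ univ.erase i,
                g₁ z * g₂ zStar * Bcoef p b i iStar z zStar * (Y i z * Y iStar zStar)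
            - (∑ z, g₁ z * ((∑ i, Y i z) / N)) * (∑ z, g₂ z * ((∑ i, Y i z) / N)) := by

  classical
  refine ⟨∑ w, p w * ((∑ z, g₁ z * a w z) * (∑ z, g₂ z * a w z)),
    fun i z => ∑ w, p w * (if w i = z then g₁ z * b w z i * (∑ z', g₂ z' * a w z')
      + (∑ z', g₁ z' * a w z') * (g₂ z * b w z i) else 0), fun Y => ?_⟩
  have hE : ∀ g : Z → ℝ, expect p (fun w => ∑ z, g z * linEst a b Y z w)
      = ∑ z, g z * ((∑ i, Y i z) / ↑N) := by
    intro g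
    calc expect p (fun w => ∑ z, g z * linEst a b Y z w)
        = ∑ w, ∑ z, g z * (p w * linEst a b Y z w) := by
          refine Finset.sum_congr rfl fun w _ => ?_
          rw [Finset.mul_sum]
          exact Finset.sum_congr rfl fun z _ => by ring
      _ = ∑ z, g z * expect p (linEst a b Y z) := by
          rw [Finset.sum_comm]
          exact Finset.sum_congr rfl fun z _ => (Finset.mul_sum _ _ _).symm
      _ = ∑ z, g z * ((∑ i, Y i z) / ↑N) :=
          Finset.sum_congr rfl fun z _ => by rw [hunb Y z]
  have key : expect p (fun w => (∑ z, g₁ z * linEst a b Y z w) * (∑ z, g₂ z * linEst a b Y z w))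
      = (∑ w, p w * ((∑ z, g₁ z * a w z) * (∑ z, g₂ z * a w z)))
        + (∑ z, ∑ i, ((∑ w, p w * (if w i = z then g₁ z * b w z i * (∑ z', g₂ z' * a w z')
              + (∑ z', g₁ z' * a w z') * (g₂ z * b w z i) else 0)) * Y i z
            + g₁ z * g₂ z * Bcoef p b i i z z * (Y i z) ^ 2))
        + ∑ z, ∑ zStar, ∑ i, ∑ iStar ∈ univ.erase i,
            g₁ z * g₂ zStar * Bcoef p b i iStar z zStar * (Y i z * Y iStar zStar) := by
    -- rewrite LHS via pointwise
    have hFsplit : ∀ (g : Z → ℝ) (w : Fin N → Z), (∑ z, g z * linEst a b Y z w)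
        = (∑ z, g z * a w z)
          + ∑ z, g z * ∑ i ∈ univ.filter (fun i => w i = z), b w z i * Y i z := by
      intro g w
      simp only [linEst, mul_add, Finset.sum_add_distrib]
    have lhs : expect p (fun w => (∑ z, g₁ z * linEst a b Y z w) * (∑ z, g₂ z * linEst a b Y z w))
        = ∑ w : Fin N → Z, (p w * ((∑ z, g₁ z * a w z) * (∑ z, g₂ z * a w z))
            + (∑ z, ∑ i, (p w * (if w i = z then g₁ z * b w z i * (∑ z', g₂ z' * a w z')
                  + (∑ z', g₁ z' * a w z') * (g₂ z * b w z i) else 0) * Y i z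
                + g₁ z * g₂ z * (if w i = z ∧ w i = z then p w * (b w z i * b w z i) else 0)
                  * Y i z ^ 2))
            + ∑ z, ∑ zStar, ∑ i, ∑ iStar ∈ univ.erase i,
                g₁ z * g₂ zStar * (if w i = z ∧ w iStar = zStar
                    then p w * (b w z i * b w zStar iStar) else 0)
                  * (Y i z * Y iStar zStar)) := by
      refine Finset.sum_congr rfl fun w _ => ?_
      beta_reduce
      rw [hFsplit g₁ w, hFsplit g₂ w]
      exact pointwise w g₁ g₂ _ _ (p w) (b w) Y
    rw [lhs, Finset.sum_add_distrib, Finset.sum_add_distrib]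
    congr 1
    · congr 1
      -- the X₁ block: swap sums
      have per : ∀ (z : Z) (i : Fin N),
          ((∑ w, p w * (if w i = z then g₁ z * b w z i * (∑ z', g₂ z' * a w z')
              + (∑ z', g₁ z' * a w z') * (g₂ z * b w z i) else 0)) * Y i z
            + g₁ z * g₂ z * Bcoef p b i i z z * (Y i z) ^ 2)
          = ∑ w : Fin N → Z, (p w * (if w i = z then g₁ z * b w z i * (∑ z', g₂ z' * a w z')
                + (∑ z', g₁ z' * a w z') * (g₂ z * b w z i) else 0) * Y i z
              + g₁ z * g₂ z * (if w i = z ∧ w i = z then p w * (b w z i * b w z i) else 0)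
                * Y i z ^ 2) := by
        intro z i
        rw [Finset.sum_add_distrib, Finset.sum_mul]
        congr 1
        rw [Bcoef, Finset.sum_filter, Finset.mul_sum, Finset.sum_mul]
      calc (∑ w : Fin N → Z, ∑ z, ∑ i, (p w * (if w i = z then g₁ z * b w z i * (∑ z', g₂ z' * a w z')
                + (∑ z', g₁ z' * a w z') * (g₂ z * b w z i) else 0) * Y i z
              + g₁ z * g₂ z * (if w i = z ∧ w i = z then p w * (b w z i * b w z i) else 0)
                * Y i z ^ 2))
          = ∑ z, ∑ w : Fin N → Z, ∑ i, (p w * (if w i = z then g₁ z * b w z i * (∑ z', g₂ z' * a w z')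
                + (∑ z', g₁ z' * a w z') * (g₂ z * b w z i) else 0) * Y i z
              + g₁ z * g₂ z * (if w i = z ∧ w i = z then p w * (b w z i * b w z i) else 0)
                * Y i z ^ 2) := Finset.sum_comm
        _ = ∑ z, ∑ i, ∑ w : Fin N → Z, (p w * (if w i = z then g₁ z * b w z i * (∑ z', g₂ z' * a w z')
                + (∑ z', g₁ z' * a w z') * (g₂ z * b w z i) else 0) * Y i z
              + g₁ z * g₂ z * (if w i = z ∧ w i = z then p w * (b w z i * b w z i) else 0)
                * Y i z ^ 2) := Finset.sum_congr rfl fun z _ => Finset.sum_comm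
        _ = ∑ z, ∑ i, ((∑ w, p w * (if w i = z then g₁ z * b w z i * (∑ z', g₂ z' * a w z')
                + (∑ z', g₁ z' * a w z') * (g₂ z * b w z i) else 0)) * Y i z
              + g₁ z * g₂ z * Bcoef p b i i z z * (Y i z) ^ 2) :=
            Finset.sum_congr rfl fun z _ => Finset.sum_congr rfl fun i _ => (per z i).symm
      -- done? calc closes goal with sides swapped: goal is sum_w ... = sum_z sum_i ...
    · -- the X₂ block
      have per : ∀ (z zStar : Z) (i iStar : Fin N),
          g₁ z * g₂ zStar * Bcoef p b i iStar z zStar * (Y i z * Y iStar zStar)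
          = ∑ w : Fin N → Z, g₁ z * g₂ zStar * (if w i = z ∧ w iStar = zStar
                then p w * (b w z i * b w zStar iStar) else 0) * (Y i z * Y iStar zStar) := by
        intro z zStar i iStar
        rw [Bcoef, Finset.sum_filter, Finset.mul_sum, Finset.sum_mul]
      calc (∑ w : Fin N → Z, ∑ z, ∑ zStar, ∑ i, ∑ iStar ∈ univ.erase i,
              g₁ z * g₂ zStar * (if w i = z ∧ w iStar = zStar
                  then p w * (b w z i * b w zStar iStar) else 0) * (Y i z * Y iStar zStar))
          = ∑ z, ∑ w : Fin N → Z, ∑ zStar, ∑ i, ∑ iStar ∈ univ.erase i,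
              g₁ z * g₂ zStar * (if w i = z ∧ w iStar = zStar
                  then p w * (b w z i * b w zStar iStar) else 0) * (Y i z * Y iStar zStar) :=
            Finset.sum_comm
        _ = ∑ z, ∑ zStar, ∑ w : Fin N → Z, ∑ i, ∑ iStar ∈ univ.erase i,
              g₁ z * g₂ zStar * (if w i = z ∧ w iStar = zStar
                  then p w * (b w z i * b w zStar iStar) else 0) * (Y i z * Y iStar zStar) :=
            Finset.sum_congr rfl fun z _ => Finset.sum_comm
        _ = ∑ z, ∑ zStar, ∑ i, ∑ w : Fin N → Z, ∑ iStar ∈ univ.erase i,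
              g₁ z * g₂ zStar * (if w i = z ∧ w iStar = zStar
                  then p w * (b w z i * b w zStar iStar) else 0) * (Y i z * Y iStar zStar) :=
            Finset.sum_congr rfl fun z _ => Finset.sum_congr rfl fun zS _ => Finset.sum_comm
        _ = ∑ z, ∑ zStar, ∑ i, ∑ iStar ∈ univ.erase i, ∑ w : Fin N → Z,
              g₁ z * g₂ zStar * (if w i = z ∧ w iStar = zStar
                  then p w * (b w z i * b w zStar iStar) else 0) * (Y i z * Y iStar zStar) :=
            Finset.sum_congr rfl fun z _ => Finset.sum_congr rfl fun zS _ =>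
              Finset.sum_congr rfl fun i _ => Finset.sum_comm
        _ = ∑ z, ∑ zStar, ∑ i, ∑ iStar ∈ univ.erase i,
              g₁ z * g₂ zStar * Bcoef p b i iStar z zStar * (Y i z * Y iStar zStar) :=
            Finset.sum_congr rfl fun z _ => Finset.sum_congr rfl fun zS _ =>
              Finset.sum_congr rfl fun i _ => Finset.sum_congr rfl fun iS _ =>
                (per z zS i iS).symm
  rw [covar_eq p hp1, hE g₁, hE g₂, key]
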